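/- Let δ₀ ∈ (0, π/(2C₁)) with C₁ > 0. Then for every z ∈ ℂ with |Im z| ≤ δ₀, |exp(−e^{C₁ z} − e^{−C₁ z})| ≤ exp(−cos(C₁ δ₀)·e^{C₁ |Re z|}). -/

import Mathlib

theorem stmt7 (C₁ δ₀ : ℝ) (hC₁ : 0 < C₁)
    (hδ₀ : δ₀ ∈ Set.Ioo 0 (Real.pi / (2 * C₁))) :
    ∀ z : ℂ, |z.im| ≤ δ₀ →
      ‖Complex.exp (-Complex.exp ((C₁ : ℂ) * z)
          - Complex.exp (-(C₁ : ℂ) * z))‖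
        ≤ Real.exp (-(Real.cos (C₁ * δ₀)) * Real.exp (C₁ * |z.re|)) := by
  obtain ⟨hδpos, hδlt⟩ := hδ₀
  intro z hz
  rw [Complex.norm_exp, Real.exp_le_exp]
  have him : ((C₁ : ℂ) * z).im = C₁ * z.im := by simp
  have hre : ((C₁ : ℂ) * z).re = C₁ * z.re := by simp
  have key : (-Complex.exp ((C₁ : ℂ) * z) - Complex.exp (-(C₁ : ℂ) * z)).re
      = -(Real.cos (C₁ * z.im) * (Real.exp (C₁ * z.re) + Real.exp (-(C₁ * z.re)))) := by
    simp [Complex.sub_re, Complex.neg_re, Complex.exp_re, him, hre]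
    ring
  rw [key]
  have hhalf : C₁ * δ₀ < Real.pi / 2 := by
    have := (lt_div_iff₀ (by positivity : (0:ℝ) < 2 * C₁)).mp hδlt
    nlinarith
  have hpi2 : (0:ℝ) < Real.pi / 2 := by positivity
  have hcosδ : 0 ≤ Real.cos (C₁ * δ₀) :=
    Real.cos_nonneg_of_mem_Icc ⟨by nlinarith, le_of_lt hhalf⟩
  have habs : |C₁ * z.im| ≤ C₁ * δ₀ := by
    rw [abs_mul, abs_of_pos hC₁]
    exact mul_le_mul_of_nonneg_left hz hC₁.le
  have hcos : Real.cos (C₁ * δ₀) ≤ Real.cos (C₁ * z.im) := by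
    rw [← Real.cos_abs (C₁ * z.im)]
    exact Real.cos_le_cos_of_nonneg_of_le_pi (abs_nonneg _)
      (by nlinarith [Real.pi_pos]) habs
  have hexp : Real.exp (C₁ * |z.re|) ≤ Real.exp (C₁ * z.re) + Real.exp (-(C₁ * z.re)) := by
    rcases abs_cases z.re with ⟨h, _⟩ | ⟨h, _⟩
    · rw [h]; nlinarith [Real.exp_pos (-(C₁ * z.re))]
    · rw [h, mul_neg]; nlinarith [Real.exp_pos (C₁ * z.re)]
  have := mul_le_mul hcos hexp (Real.exp_pos _).le
    (le_trans hcosδ hcos)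
  linarith
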